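/- Let $E$ be a topological graph, $G$ a locally compact group acting freely and properly on $E$, with quotient graph $F = E/G$ and quotient map $q$. For $\xi \in C_c(F^1)$, the formula $(\mu(\xi)\cdot f)(e) = \xi(q(e)) f(s(e))$, for $f \in C_c(E^0)$, defines an element $\mu(\xi)\cdot f \in C_c(E^1)$, and for every $v \in E^0$ one has $\langle \mu(\xi)\cdot f, \mu(\xi)\cdot f\rangle(v) = \langle \xi, \xi\rangle(q(v)) |f(v)|^2$; in particular $\|\mu(\xi)\cdot f\| \leq \|\xi\| \|f\|$ in the Hilbert module $\mathcal H(E)$. -/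

import Mathlib

/-- Lift a compact set through an open surjection from a locally compact space. -/
lemma aux_compact_lift {X Y : Type*} [TopologicalSpace X] [LocallyCompactSpace X]
    [TopologicalSpace Y] {π : X → Y} (hπo : IsOpenMap π) (hπs : Function.Surjective π)
    {K : Set Y} (hK : IsCompact K) :
    ∃ C : Set X, IsCompact C ∧ K ⊆ π '' C := by
  choose pt hpt using hπs
  choose N hNcomp hNnhds using fun x : X => exists_compact_mem_nhds x
  have hcov : K ⊆ ⋃ y : Y, π '' interior (N (pt y)) := by
    intro y hy
    exact Set.mem_iUnion.2 ⟨y, ⟨pt y, mem_interior_iff_mem_nhds.2 (hNnhds (pt y)), hpt y⟩⟩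
  obtain ⟨t, ht⟩ := hK.elim_finite_subcover (fun y : Y => π '' interior (N (pt y)))
    (fun y => hπo _ isOpen_interior) hcov
  refine ⟨⋃ y ∈ t, N (pt y), t.isCompact_biUnion (fun y _ => hNcomp (pt y)), ?_⟩
  intro z hz
  obtain ⟨y, hyt, x, hx, rfl⟩ := by simpa using ht hz
  exact ⟨x, Set.mem_biUnion hyt (interior_subset hx), rfl⟩

/-- Uniform bound on the number of points in fibers of a local homeomorphism
meeting a fixed compact set. -/
lemma aux_fiber_bound {X Y : Type*} [TopologicalSpace X] [TopologicalSpace Y]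
    {s : X → Y} (hs : IsLocalHomeomorph s) {K : Set X} (hK : IsCompact K) :
    ∃ n : ℕ, ∀ v : Y, ∃ T : Finset X, (∀ e, e ∈ K → s e = v → e ∈ T) ∧ T.card ≤ n := by
  classical
  choose φ hφmem hφeq using hs
  obtain ⟨t, ht⟩ := hK.elim_finite_subcover (fun x : X => (φ x).source)
    (fun x => (φ x).open_source) (fun x hx => Set.mem_iUnion.2 ⟨x, hφmem x⟩)
  refine ⟨t.card, fun v => ?_⟩
  set S : Set X := {e | e ∈ K ∧ s e = v} with hS
  have hmem : ∀ e ∈ S, ∃ x ∈ t, e ∈ (φ x).source := by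
    intro e he
    simpa using ht he.1
  choose idx hidxt hidxmem using hmem
  set j : X → X := fun e => if h : e ∈ S then idx e h else e with hj
  have hinj : Set.InjOn j S := by
    intro a ha b hb hab
    rw [hj] at hab
    simp only [dif_pos ha, dif_pos hb] at hab
    have hsrc : a ∈ (φ (idx a ha)).source := hidxmem a ha
    have hsrc' : b ∈ (φ (idx a ha)).source := hab ▸ hidxmem b hb
    have heq : (φ (idx a ha)) a = (φ (idx a ha)) b := by
      rw [← hφeq (idx a ha)]; exact ha.2.trans hb.2.symm
    exact (φ (idx a ha)).injOn hsrc hsrc' heq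
  have hmap : ∀ a ∈ S, j a ∈ (t : Set X) := by
    intro a ha; rw [hj]; simp only [dif_pos ha]; exact hidxt a ha
  have hfin : S.Finite := Set.Finite.of_finite_image
    (Set.Finite.subset t.finite_toSet (Set.image_subset_iff.2 hmap)) hinj
  have hcard : S.ncard ≤ t.card := by
    have := Set.ncard_le_ncard_of_injOn j hmap hinj t.finite_toSet
    simpa [Set.ncard_coe_finset] using this
  refine ⟨hfin.toFinset, fun e he1 he2 => ?_, ?_⟩
  · simpa using (hfin.mem_toFinset).2 ⟨he1, he2⟩
  · rw [← Set.ncard_eq_toFinset_card S hfin]; exact hcard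

theorem stmt18 {G E0 E1 : Type*} [Group G] [TopologicalSpace G]
    [T2Space G] [LocallyCompactSpace G] [IsTopologicalGroup G]
    [TopologicalSpace E0] [TopologicalSpace E1]
    [T2Space E0] [T2Space E1] [LocallyCompactSpace E0] [LocallyCompactSpace E1]
    [MulAction G E0] [MulAction G E1]
    (hc0 : Continuous fun p : G × E0 => p.1 • p.2)
    (hc1 : Continuous fun p : G × E1 => p.1 • p.2)
    (hfree0 : ∀ (g : G) (v : E0), g • v = v → g = 1)
    (hfree1 : ∀ (g : G) (e : E1), g • e = e → g = 1)
    (hprop0 : IsProperMap fun gp : G × E0 => (gp.1 • gp.2, gp.2))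
    (hprop1 : IsProperMap fun gp : G × E1 => (gp.1 • gp.2, gp.2))
    (s r : E1 → E0) (hs : IsLocalHomeomorph s) (hr : Continuous r)
    (hseq : ∀ (g : G) (e : E1), s (g • e) = g • s e)
    (hreq : ∀ (g : G) (e : E1), r (g • e) = g • r e)
    -- the induced source map of the quotient graph
    (sbar : Quotient (MulAction.orbitRel G E1) → Quotient (MulAction.orbitRel G E0))
    (hsbar : ∀ e : E1, sbar (Quotient.mk (MulAction.orbitRel G E1) e)
        = Quotient.mk (MulAction.orbitRel G E0) (s e))
    -- `ξ ∈ C_c(F¹)` and `f ∈ C_c(E⁰)`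
    (ξ : Quotient (MulAction.orbitRel G E1) → ℂ)
    (hξc : Continuous ξ) (hξs : HasCompactSupport ξ)
    (f : E0 → ℂ) (hfc : Continuous f) (hfs : HasCompactSupport f) :
    -- `μ(ξ)·f ∈ C_c(E¹)`
    Continuous (fun e : E1 => ξ (Quotient.mk (MulAction.orbitRel G E1) e) * f (s e)) ∧
    HasCompactSupport (fun e : E1 => ξ (Quotient.mk (MulAction.orbitRel G E1) e) * f (s e)) ∧
    -- the inner-product identity `⟨μ(ξ)·f, μ(ξ)·f⟩(v) = ⟨ξ,ξ⟩(q v) |f v|²`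
    (∀ v : E0,
      (∑' e : {e : E1 // s e = v},
          ‖ξ (Quotient.mk (MulAction.orbitRel G E1) e.1) * f (s e.1)‖ ^ 2)
        = (∑' w : {w : Quotient (MulAction.orbitRel G E1) //
              sbar w = Quotient.mk (MulAction.orbitRel G E0) v}, ‖ξ w.1‖ ^ 2) * ‖f v‖ ^ 2) ∧
    -- the norm inequality `‖μ(ξ)·f‖ ≤ ‖ξ‖ ‖f‖`
    (⨆ v : E0, Real.sqrt (∑' e : {e : E1 // s e = v},
        ‖ξ (Quotient.mk (MulAction.orbitRel G E1) e.1) * f (s e.1)‖ ^ 2))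
      ≤ (⨆ w0 : Quotient (MulAction.orbitRel G E0),
          Real.sqrt (∑' w : {w : Quotient (MulAction.orbitRel G E1) // sbar w = w0},
            ‖ξ w.1‖ ^ 2)) * ⨆ v : E0, ‖f v‖ := by
  classical
  haveI : ContinuousSMul G E0 := ⟨hc0⟩
  haveI : ContinuousSMul G E1 := ⟨hc1⟩
  set q1 : E1 → Quotient (MulAction.orbitRel G E1) :=
    Quotient.mk (MulAction.orbitRel G E1) with hq1
  set q0 : E0 → Quotient (MulAction.orbitRel G E0) :=
    Quotient.mk (MulAction.orbitRel G E0) with hq0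
  have hscont : Continuous s := hs.continuous
  have hq1c : Continuous q1 := continuous_quotient_mk'
  have hq1o : IsOpenMap q1 := MulAction.isOpenQuotientMap_quotientMk.isOpenMap
  have hq1s : Function.Surjective q1 := Quotient.exists_rep
  have hq1smul : ∀ (g : G) (e : E1), q1 (g • e) = q1 e := by
    intro g e
    exact Quotient.sound (MulAction.mem_orbit e g)
  have hq1exact : ∀ {a b : E1}, q1 a = q1 b → ∃ g : G, g • b = a := by
    intro a b hab
    exact MulAction.mem_orbit_iff.mp (MulAction.orbitRel_apply.mp (Quotient.exact hab))
  -- continuity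
  have hcont : Continuous (fun e : E1 => ξ (q1 e) * f (s e)) :=
    (hξc.comp hq1c).mul (hfc.comp hscont)
  -- key compactness fact
  have keyK : ∀ L : Set E0, IsCompact L →
      IsCompact (q1 ⁻¹' (tsupport ξ) ∩ s ⁻¹' L) := by
    intro L hL
    obtain ⟨C, hCcomp, hCsub⟩ := aux_compact_lift hq1o hq1s hξs
    have hDcomp : IsCompact ((fun gp : G × E0 => (gp.1 • gp.2, gp.2)) ⁻¹' (L ×ˢ (s '' C))) :=
      hprop0.isCompact_preimage (hL.prod (hCcomp.image hscont))
    set T : Set (G × E1) := {p : G × E1 | p.2 ∈ C ∧ p.1 • s p.2 ∈ L} with hT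
    have hTsub : T ⊆ (Prod.fst '' ((fun gp : G × E0 => (gp.1 • gp.2, gp.2)) ⁻¹'
        (L ×ˢ (s '' C)))) ×ˢ C := by
      rintro ⟨g, c⟩ ⟨hc, hgl⟩
      exact ⟨⟨(g, s c), ⟨hgl, ⟨c, hc, rfl⟩⟩, rfl⟩, hc⟩
    have hTclosed : IsClosed T := by
      have h1 : IsClosed {p : G × E1 | p.2 ∈ C} := hCcomp.isClosed.preimage continuous_snd
      have h2 : IsClosed {p : G × E1 | p.1 • s p.2 ∈ L} :=
        hL.isClosed.preimage (hc0.comp (continuous_fst.prodMk (hscont.comp continuous_snd)))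
      exact h1.inter h2
    have hTcomp : IsCompact T :=
      ((hDcomp.image continuous_fst).prod hCcomp).of_isClosed_subset hTclosed hTsub
    have hTimg : IsCompact ((fun p : G × E1 => p.1 • p.2) '' T) := hTcomp.image hc1
    refine hTimg.of_isClosed_subset
      (((isClosed_tsupport ξ).preimage hq1c).inter (hL.isClosed.preimage hscont)) ?_
    rintro e ⟨he1, he2⟩
    obtain ⟨c, hcC, hcq⟩ := hCsub he1
    obtain ⟨g, hg⟩ := hq1exact hcq
    refine ⟨(g⁻¹, c), ⟨hcC, ?_⟩, ?_⟩
    · rw [← hg, hseq]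
      simpa using he2
    · show g⁻¹ • c = e
      rw [← hg, inv_smul_smul]
  -- compact support of `μ(ξ)·f`
  have hsupp : HasCompactSupport (fun e : E1 => ξ (q1 e) * f (s e)) := by
    refine HasCompactSupport.intro (keyK (tsupport f) hfs) ?_
    intro e he
    by_contra hne
    have h1 : ξ (q1 e) ≠ 0 := fun h => hne (by rw [h, zero_mul])
    have h2 : f (s e) ≠ 0 := fun h => hne (by rw [h, mul_zero])
    exact he ⟨subset_tsupport ξ h1, subset_tsupport f h2⟩
  -- the bijection between fibers
  have eqvkey : ∀ v : E0, (∑' w : {w // sbar w = q0 v}, ‖ξ w.1‖ ^ 2)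
      = ∑' e : {e : E1 // s e = v}, ‖ξ (q1 e.1)‖ ^ 2 := by
    intro v
    have hbij : Function.Bijective (fun e : {e : E1 // s e = v} =>
        (⟨q1 e.1, by rw [hq1, hsbar, e.2]⟩ : {w // sbar w = q0 v})) := by
      constructor
      · rintro ⟨a, ha⟩ ⟨b, hb⟩ hab
        have hab' : q1 a = q1 b := congrArg Subtype.val hab
        obtain ⟨g, hg⟩ := hq1exact hab'
        have hv : g • v = v := by rw [← hb, ← hseq, hg, ha, hb]
        have hg1 : g = 1 := hfree0 g v hv
        refine Subtype.ext ?_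
        show a = b
        rw [← hg, hg1, one_smul]
      · rintro ⟨w, hw⟩
        obtain ⟨e, rfl⟩ := hq1s w
        rw [hq1, hsbar] at hw
        obtain ⟨g, hg⟩ := (MulAction.mem_orbit_iff.mp (MulAction.orbitRel_apply.mp
          (Quotient.exact hw)))
        refine ⟨⟨g⁻¹ • e, by rw [hseq, ← hg, inv_smul_smul]⟩, Subtype.ext ?_⟩
        exact hq1smul g⁻¹ e
    exact ((Equiv.ofBijective _ hbij).tsum_eq (fun w : {w // sbar w = q0 v} =>
      ‖ξ w.1‖ ^ 2)).symm
  -- inner product identity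
  have part3 : ∀ v : E0, (∑' e : {e : E1 // s e = v}, ‖ξ (q1 e.1) * f (s e.1)‖ ^ 2)
      = (∑' w : {w // sbar w = q0 v}, ‖ξ w.1‖ ^ 2) * ‖f v‖ ^ 2 := by
    intro v
    rw [eqvkey v, ← tsum_mul_right]
    exact tsum_congr fun e => by rw [e.2, norm_mul, mul_pow]
  -- translation invariance of the fiber sums
  have Sinv : ∀ (g : G) (v : E0),
      (∑' e : {e : E1 // s e = g • v}, ‖ξ (q1 e.1)‖ ^ 2)
        = ∑' e : {e : E1 // s e = v}, ‖ξ (q1 e.1)‖ ^ 2 := by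
    intro g v
    have hbij : Function.Bijective (fun e : {e : E1 // s e = v} =>
        (⟨g • e.1, by rw [hseq, e.2]⟩ : {e : E1 // s e = g • v})) := by
      constructor
      · rintro ⟨a, _⟩ ⟨b, _⟩ hab
        exact Subtype.ext (smul_left_cancel g (congrArg Subtype.val hab))
      · rintro ⟨a, ha⟩
        exact ⟨⟨g⁻¹ • a, by rw [hseq, ha, inv_smul_smul]⟩, Subtype.ext (smul_inv_smul g a)⟩
    rw [← (Equiv.ofBijective _ hbij).tsum_eq
      (fun e : {e : E1 // s e = g • v} => ‖ξ (q1 e.1)‖ ^ 2)]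
    refine tsum_congr fun a => ?_
    show ‖ξ (q1 (g • a.1))‖ ^ 2 = ‖ξ (q1 a.1)‖ ^ 2
    rw [hq1smul g a.1]
  -- uniform bound on ξ
  obtain ⟨Cξ, hCξ⟩ := hξc.bounded_above_of_compact_support hξs
  set M : ℝ := (max Cξ 0) ^ 2 with hMdef
  have hM : ∀ w, ‖ξ w‖ ^ 2 ≤ M :=
    fun w => pow_le_pow_left₀ (norm_nonneg _) ((hCξ w).trans (le_max_left _ _)) 2
  have hM0 : 0 ≤ M := sq_nonneg _
  -- the main uniform bound on fiber sums
  obtain ⟨C, hCcomp, hCsub⟩ := aux_compact_lift hq1o hq1s hξs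
  have hKcomp := keyK (s '' C) (hCcomp.image hscont)
  obtain ⟨n, hn⟩ := aux_fiber_bound hs hKcomp
  have Sbound : ∀ v : E0, (∑' e : {e : E1 // s e = v}, ‖ξ (q1 e.1)‖ ^ 2) ≤ n * M := by
    intro v
    by_cases hex : ∃ e : E1, s e = v ∧ ξ (q1 e) ≠ 0
    · obtain ⟨e0, he0, hne⟩ := hex
      have hts : q1 e0 ∈ tsupport ξ := subset_tsupport ξ hne
      obtain ⟨c, hcC, hcq⟩ := hCsub hts
      obtain ⟨g, hg⟩ := hq1exact hcq   -- g • e0 = c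
      have hvL : g • v ∈ s '' C := ⟨c, hcC, by rw [← hg, hseq, he0]⟩
      rw [← Sinv g v]
      obtain ⟨T, hTmem, hTcard⟩ := hn (g • v)
      set P : Set {e : E1 // s e = g • v} := {e | e.1 ∈ T} with hP
      have hPfin : P.Finite :=
        Set.Finite.preimage Subtype.val_injective.injOn T.finite_toSet
      have hzero : ∀ e : {e : E1 // s e = g • v},
          e ∉ hPfin.toFinset → ‖ξ (q1 e.1)‖ ^ 2 = 0 := by
        intro e he
        by_contra hne'
        have hξne : ξ (q1 e.1) ≠ 0 := by
          intro h; exact hne' (by rw [h]; simp)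
        have h1 : q1 e.1 ∈ tsupport ξ := subset_tsupport ξ hξne
        have h2 : e.1 ∈ q1 ⁻¹' (tsupport ξ) ∩ s ⁻¹' (s '' C) :=
          ⟨h1, by rw [Set.mem_preimage, e.2]; exact hvL⟩
        exact he (hPfin.mem_toFinset.2 (hTmem e.1 h2 e.2))
      rw [tsum_eq_sum hzero]
      have hle1 : ∑ e ∈ hPfin.toFinset, ‖ξ (q1 e.1)‖ ^ 2 ≤ hPfin.toFinset.card • M :=
        Finset.sum_le_card_nsmul _ _ M (fun e _ => hM (q1 e.1))
      have hle2 : hPfin.toFinset.card ≤ T.card := by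
        refine Finset.card_le_card_of_injOn (fun e => e.1) ?_ ?_
        · intro e he
          exact hPfin.mem_toFinset.1 he
        · intro a _ b _ hab
          exact Subtype.ext hab
      calc ∑ e ∈ hPfin.toFinset, ‖ξ (q1 e.1)‖ ^ 2
          ≤ hPfin.toFinset.card • M := hle1
        _ = (hPfin.toFinset.card : ℝ) * M := nsmul_eq_mul _ _
        _ ≤ n * M := by
            exact mul_le_mul_of_nonneg_right (Nat.cast_le.2 (hle2.trans hTcard)) hM0
    · have hz : ∀ e : {e : E1 // s e = v}, ‖ξ (q1 e.1)‖ ^ 2 = 0 := by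
        intro e
        have : ξ (q1 e.1) = 0 := by
          by_contra h
          exact hex ⟨e.1, e.2, h⟩
        rw [this]; simp
      rw [tsum_congr hz, tsum_zero]
      positivity
  have Awbound : ∀ w0, (∑' w : {w // sbar w = w0}, ‖ξ w.1‖ ^ 2) ≤ n * M := by
    intro w0
    obtain ⟨v, rfl⟩ := Quotient.exists_rep w0
    rw [show Quotient.mk (MulAction.orbitRel G E0) v = q0 v from rfl, eqvkey v]
    exact Sbound v
  -- the norm inequality
  refine ⟨hcont, hsupp, part3, ?_⟩
  have hAnn : ∀ w0, 0 ≤ ∑' w : {w // sbar w = w0}, ‖ξ w.1‖ ^ 2 :=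
    fun w0 => tsum_nonneg fun w => by positivity
  have hbddA : BddAbove (Set.range fun w0 =>
      Real.sqrt (∑' w : {w // sbar w = w0}, ‖ξ w.1‖ ^ 2)) := by
    refine ⟨Real.sqrt (n * M), ?_⟩
    rintro x ⟨w0, rfl⟩
    exact Real.sqrt_le_sqrt (Awbound w0)
  obtain ⟨Bf, hBf⟩ := hfc.bounded_above_of_compact_support hfs
  have hbddf : BddAbove (Set.range fun v : E0 => ‖f v‖) := by
    refine ⟨Bf, ?_⟩
    rintro x ⟨v, rfl⟩
    exact hBf v
  refine Real.iSup_le (fun v => ?_)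
    (mul_nonneg (Real.iSup_nonneg fun _ => Real.sqrt_nonneg _)
      (Real.iSup_nonneg fun _ => norm_nonneg _))
  rw [part3 v, Real.sqrt_mul (hAnn (q0 v)), Real.sqrt_sq (norm_nonneg (f v))]
  exact mul_le_mul (le_ciSup hbddA (q0 v)) (le_ciSup hbddf v) (norm_nonneg _)
    (Real.iSup_nonneg fun _ => Real.sqrt_nonneg _)
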